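/- arXiv:2207.01804 — 4 statements merged into one kernel-verified Lean document; each statement's English description precedes it below -/
import Mathlib

section
/- (Radial weighted decay estimate, d = 2 case.) Let γ > -1 and let f : ℝ² → ℝ be a C¹ radial function, f(x) = F(|x|), such that F(r) → 0 as r → ∞ and ∫₀^∞ |F'(s)|² (1+s²)^{γ+1} s ds = E² < ∞. Then for all R ≥ 1, |F(R)| ≤ C(γ) E · R^{-γ-1}, where C(γ) depends only on γ. -/
open MeasureTheory Set Real Filter

/-- Radial weighted decay estimate (d = 2): if F → 0 at infinity and
∫₀^∞ |F'(s)|² (1+s²)^{γ+1} s ds = E² < ∞ with γ > -1, then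
|F(R)| ≤ C(γ) E R^{-γ-1} for all R ≥ 1, with C depending only on γ. -/
theorem stmt7 (γ : ℝ) (hγ : -1 < γ) :
    ∃ C > 0, ∀ F F' : ℝ → ℝ,
      (∀ r : ℝ, 0 < r → HasDerivAt F (F' r) r) →
      Filter.Tendsto F Filter.atTop (nhds 0) →
      IntegrableOn (fun s => (F' s) ^ 2 * (1 + s ^ 2) ^ (γ + 1) * s) (Set.Ioi 0) →
      ∀ E : ℝ, 0 ≤ E →
        (∫ s in Set.Ioi (0:ℝ), (F' s) ^ 2 * (1 + s ^ 2) ^ (γ + 1) * s) = E ^ 2 →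
        ∀ R : ℝ, 1 ≤ R → |F R| ≤ C * E * R ^ (-γ - 1) := by
  have h2γ : (0:ℝ) < 2*γ + 2 := by linarith
  refine ⟨(2*γ+2) ^ (-(1/2) : ℝ), Real.rpow_pos_of_pos h2γ _, ?_⟩
  intro F F' hderiv htend hint E hE hE2 R hR
  have hR0 : (0:ℝ) < R := lt_of_lt_of_le one_pos hR
  set w : ℝ → ℝ := fun s => (1 + s ^ 2) ^ (γ + 1) * s with hw
  have hwpos : ∀ s : ℝ, 0 < s → 0 < w s := fun s hs =>
    mul_pos (Real.rpow_pos_of_pos (by positivity) _) hs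
  have hwm : Measurable w := by rw [hw]; measurability
  have hwlb : ∀ s : ℝ, 1 ≤ s → s ^ (2*γ+3) ≤ w s := by
    intro s hs
    have hs0 : (0:ℝ) < s := lt_of_lt_of_le one_pos hs
    have h1 : s ^ (2*γ+2) ≤ (1 + s ^ 2) ^ (γ + 1) := by
      have h2 : (s ^ 2 : ℝ) ^ (γ+1) ≤ (1 + s ^ 2) ^ (γ+1) :=
        Real.rpow_le_rpow (by positivity) (by linarith) (by linarith)
      have h3 : s ^ (2*γ+2) = (s ^ 2 : ℝ) ^ (γ+1) := by
        rw [← Real.rpow_two, ← Real.rpow_mul hs0.le]; ring_nf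
      linarith
    calc s ^ (2*γ+3) = s ^ (2*γ+2) * s := by
          rw [← Real.rpow_add_one hs0.ne']; ring_nf
      _ ≤ w s := mul_le_mul_of_nonneg_right h1 hs0.le
  -- integrability of w⁻¹ on Ioi R
  have hrpow_int : IntegrableOn (fun s : ℝ => s ^ (-2*γ-3)) (Ioi R) :=
    integrableOn_Ioi_rpow_of_lt (by linarith) hR0
  have hwinv_le : ∀ s ∈ Ioi R, (w s)⁻¹ ≤ s ^ (-2*γ-3) := by
    intro s hs
    have hs1 : 1 ≤ s := le_of_lt (lt_of_le_of_lt hR hs)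
    have hs0 : (0:ℝ) < s := lt_of_lt_of_le one_pos hs1
    calc (w s)⁻¹ ≤ (s ^ (2*γ+3))⁻¹ :=
          inv_anti₀ (Real.rpow_pos_of_pos hs0 _) (hwlb s hs1)
      _ = s ^ (-2*γ-3) := by rw [← Real.rpow_neg hs0.le]; ring_nf
  have hwinv_int : IntegrableOn (fun s => (w s)⁻¹) (Ioi R) := by
    refine Integrable.mono hrpow_int hwm.inv.aestronglyMeasurable ?_
    filter_upwards [ae_restrict_mem measurableSet_Ioi] with s hs
    have hs0 : (0:ℝ) < s := hR0.trans hs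
    rw [Real.norm_eq_abs, Real.norm_eq_abs, abs_of_nonneg (inv_nonneg.2 (hwpos s hs0).le),
      abs_of_nonneg (Real.rpow_nonneg hs0.le _)]
    exact hwinv_le s hs
  -- measurability of F'
  have hF'm : AEStronglyMeasurable F' (volume.restrict (Ioi R)) := by
    refine (measurable_deriv F).aestronglyMeasurable.congr ?_
    refine (ae_restrict_iff' measurableSet_Ioi).2 (Eventually.of_forall fun s hs => ?_)
    exact (hderiv s (lt_trans hR0 hs)).deriv
  -- integrability of F' on Ioi R by AM–GM
  have hint' : IntegrableOn (fun s => (F' s) ^ 2 * (1 + s ^ 2) ^ (γ + 1) * s) (Ioi R) :=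
    hint.mono_set (Ioi_subset_Ioi hR0.le)
  have hF'int : IntegrableOn F' (Ioi R) := by
    have hdom : IntegrableOn
        (fun s => ((F' s) ^ 2 * (1 + s ^ 2) ^ (γ + 1) * s + (w s)⁻¹)/2) (Ioi R) :=
      (hint'.add hwinv_int).div_const 2
    refine Integrable.mono hdom hF'm ?_
    filter_upwards [ae_restrict_mem measurableSet_Ioi] with s hs
    have hs0 : (0:ℝ) < s := hR0.trans hs
    have hb : 0 < w s := hwpos s hs0
    have hbinv : w s * (w s)⁻¹ = 1 := mul_inv_cancel₀ hb.ne'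
    have hineq : |F' s| ≤ ((F' s) ^ 2 * (1 + s ^ 2) ^ (γ + 1) * s + (w s)⁻¹)/2 := by
      have hws : (F' s) ^ 2 * (1 + s ^ 2) ^ (γ + 1) * s = (F' s) ^ 2 * w s := by
        simp only [hw]; ring
      rw [hws]
      have h1 : (|F' s| * w s - 1) ^ 2 = F' s ^ 2 * w s * w s - 2 * |F' s| * w s + 1 := by
        rw [sub_sq, mul_pow, sq_abs]; ring
      have h2 : 2 * |F' s| * w s ≤ F' s ^ 2 * w s * w s + 1 := by
        nlinarith [sq_nonneg (|F' s| * w s - 1)]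
      rw [div_eq_mul_inv, ← mul_le_mul_iff_of_pos_right hb]
      calc |F' s| * w s ≤ (F' s ^ 2 * w s * w s + 1) / 2 := by linarith
        _ = (F' s ^ 2 * w s + (w s)⁻¹) * 2⁻¹ * w s := by field_simp
    rw [Real.norm_eq_abs, Real.norm_eq_abs]
    refine hineq.trans (le_abs_self _)
  -- FTC on [R, ∞)
  have hFTC : ∫ s in Ioi R, F' s = 0 - F R :=
    integral_Ioi_of_hasDerivAt_of_tendsto
      (hderiv R hR0).continuousAt.continuousWithinAt
      (fun x hx => hderiv x (lt_trans hR0 hx)) hF'int htend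
  have hFR : |F R| = |∫ s in Ioi R, F' s| := by rw [hFTC, zero_sub, abs_neg]
  -- Cauchy–Schwarz setup
  set u : ℝ → ℝ := fun s => F' s * Real.sqrt (w s) with hu
  set v : ℝ → ℝ := fun s => (Real.sqrt (w s))⁻¹ with hv
  have hum : AEStronglyMeasurable u (volume.restrict (Ioi R)) :=
    hF'm.mul hwm.sqrt.aestronglyMeasurable
  have hvm : AEStronglyMeasurable v (volume.restrict (Ioi R)) :=
    hwm.sqrt.inv.aestronglyMeasurable
  have hu2 : Integrable (fun s => u s ^ 2) (volume.restrict (Ioi R)) := by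
    refine hint'.congr ?_
    refine (ae_restrict_iff' measurableSet_Ioi).2 (Eventually.of_forall fun s hs => ?_)
    have hs0 : (0:ℝ) < s := hR0.trans hs
    simp only [hu, mul_pow, Real.sq_sqrt (hwpos s hs0).le]; simp only [hw]
    ring
  have hv2 : Integrable (fun s => v s ^ 2) (volume.restrict (Ioi R)) := by
    refine hwinv_int.congr ?_
    refine (ae_restrict_iff' measurableSet_Ioi).2 (Eventually.of_forall fun s hs => ?_)
    have hs0 : (0:ℝ) < s := hR0.trans hs
    simp only [hv, inv_pow, Real.sq_sqrt (hwpos s hs0).le]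
  have h2 : (ENNReal.ofReal (2:ℝ)) = 2 := by norm_num
  have humem : MemLp u (ENNReal.ofReal 2) (volume.restrict (Ioi R)) := by
    rw [h2]; exact (memLp_two_iff_integrable_sq hum).2 hu2
  have hvmem : MemLp v (ENNReal.ofReal 2) (volume.restrict (Ioi R)) := by
    rw [h2]; exact (memLp_two_iff_integrable_sq hvm).2 hv2
  have hpq : Real.HolderConjugate 2 2 := by rw [Real.holderConjugate_iff]; norm_num
  have hCS := integral_mul_norm_le_Lp_mul_Lq hpq humem hvmem
  -- identify LHS of Cauchy–Schwarz with ∫ |F'|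
  have hLHS : ∫ s in Ioi R, ‖u s‖ * ‖v s‖ = ∫ s in Ioi R, |F' s| := by
    refine setIntegral_congr_fun measurableSet_Ioi fun s hs => ?_
    have hs0 : (0:ℝ) < s := hR0.trans hs
    have hsq : Real.sqrt (w s) > 0 := Real.sqrt_pos.2 (hwpos s hs0)
    simp only [hu, hv, Real.norm_eq_abs, abs_mul, abs_inv,
      abs_of_pos hsq]
    field_simp
  -- bound the two factors
  have hA : (∫ s in Ioi R, ‖u s‖ ^ (2:ℝ)) ^ ((1:ℝ)/2) ≤ E := by
    have hAeq : ∫ s in Ioi R, ‖u s‖ ^ (2:ℝ) = ∫ s in Ioi R, u s ^ 2 := by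
      refine setIntegral_congr_fun measurableSet_Ioi fun s hs => ?_
      rw [Real.rpow_two, Real.norm_eq_abs, sq_abs]
    have hint0 : ∀ s ∈ Ioi (0:ℝ), 0 ≤ (F' s) ^ 2 * (1 + s ^ 2) ^ (γ + 1) * s := by
      intro s hs
      have hs0 : (0:ℝ) < s := hs
      positivity
    have hAle : ∫ s in Ioi R, u s ^ 2 ≤ E ^ 2 := by
      rw [← hE2]
      have heq : ∫ s in Ioi R, u s ^ 2
          = ∫ s in Ioi R, (F' s) ^ 2 * (1 + s ^ 2) ^ (γ + 1) * s := by
        refine setIntegral_congr_fun measurableSet_Ioi fun s hs => ?_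
        have hs0 : (0:ℝ) < s := hR0.trans hs
        simp only [hu, mul_pow, Real.sq_sqrt (hwpos s hs0).le]; simp only [hw]
        ring
      rw [heq]
      refine setIntegral_mono_set hint ?_ ?_
      · exact (ae_restrict_iff' measurableSet_Ioi).2
          (Eventually.of_forall fun s hs => hint0 s hs)
      · exact HasSubset.Subset.eventuallyLE (Ioi_subset_Ioi hR0.le)
    have hA0 : 0 ≤ ∫ s in Ioi R, u s ^ 2 :=
      setIntegral_nonneg measurableSet_Ioi fun s _ => sq_nonneg _
    calc (∫ s in Ioi R, ‖u s‖ ^ (2:ℝ)) ^ ((1:ℝ)/2)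
        = (∫ s in Ioi R, u s ^ 2) ^ ((1:ℝ)/2) := by rw [hAeq]
      _ ≤ (E ^ 2) ^ ((1:ℝ)/2) := Real.rpow_le_rpow hA0 hAle (by norm_num)
      _ = E := by
          rw [← Real.rpow_two, ← Real.rpow_mul hE]; norm_num
  have hB : (∫ s in Ioi R, ‖v s‖ ^ (2:ℝ)) ^ ((1:ℝ)/2)
      ≤ (2*γ+2) ^ (-(1/2):ℝ) * R ^ (-γ-1) := by
    have hBeq : ∫ s in Ioi R, ‖v s‖ ^ (2:ℝ) = ∫ s in Ioi R, (w s)⁻¹ := by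
      refine setIntegral_congr_fun measurableSet_Ioi fun s hs => ?_
      have hs0 : (0:ℝ) < s := hR0.trans hs
      rw [Real.rpow_two, Real.norm_eq_abs, sq_abs]
      simp only [hv, inv_pow, Real.sq_sqrt (hwpos s hs0).le]
    have hBle : ∫ s in Ioi R, (w s)⁻¹ ≤ R ^ (-2*γ-2) / (2*γ+2) := by
      have h1 : ∫ s in Ioi R, (w s)⁻¹ ≤ ∫ s in Ioi R, s ^ (-2*γ-3) :=
        setIntegral_mono_on hwinv_int hrpow_int measurableSet_Ioi hwinv_le
      have h2' : ∫ s in Ioi R, s ^ (-2*γ-3) = R ^ (-2*γ-2) / (2*γ+2) := by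
        rw [integral_Ioi_rpow_of_lt (by linarith) hR0]
        rw [show (-2*γ-3 + 1 : ℝ) = -(2*γ+2) by ring,
          show (-2*γ-2 : ℝ) = -(2*γ+2) by ring, div_neg]
        ring
      linarith
    have hB0 : 0 ≤ ∫ s in Ioi R, (w s)⁻¹ :=
      setIntegral_nonneg measurableSet_Ioi fun s hs =>
        inv_nonneg.2 (hwpos s (hR0.trans hs)).le
    calc (∫ s in Ioi R, ‖v s‖ ^ (2:ℝ)) ^ ((1:ℝ)/2)
        = (∫ s in Ioi R, (w s)⁻¹) ^ ((1:ℝ)/2) := by rw [hBeq]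
      _ ≤ (R ^ (-2*γ-2) / (2*γ+2)) ^ ((1:ℝ)/2) := Real.rpow_le_rpow hB0 hBle (by norm_num)
      _ = (2*γ+2) ^ (-(1/2):ℝ) * R ^ (-γ-1) := by
          rw [div_eq_mul_inv, Real.mul_rpow (Real.rpow_nonneg hR0.le _)
            (inv_nonneg.2 h2γ.le)]
          rw [← Real.rpow_mul hR0.le, Real.inv_rpow h2γ.le, ← Real.rpow_neg h2γ.le,
            show (-2*γ-2) * ((1:ℝ)/2) = -γ-1 by ring]
          ring
  -- put it together
  have habs : |∫ s in Ioi R, F' s| ≤ ∫ s in Ioi R, |F' s| := by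
    simpa [Real.norm_eq_abs] using
      norm_integral_le_integral_norm (μ := volume.restrict (Ioi R)) F'
  have hfinal : |F R| ≤ E * ((2*γ+2) ^ (-(1/2):ℝ) * R ^ (-γ-1)) := by
    rw [hFR]
    refine habs.trans ?_
    rw [← hLHS]
    refine hCS.trans ?_
    refine mul_le_mul hA hB (Real.rpow_nonneg ?_ _) hE
    exact setIntegral_nonneg measurableSet_Ioi fun s _ =>
      Real.rpow_nonneg (norm_nonneg _) _
  calc |F R| ≤ E * ((2*γ+2) ^ (-(1/2):ℝ) * R ^ (-γ-1)) := hfinal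
    _ = (2*γ+2) ^ (-(1/2):ℝ) * E * R ^ (-γ-1) := by ring
end

section
/- For a continuous radial function F supported in [1,∞) with |F(r)| ≤ C r^{-2}, any C² solution 𝒦 of 𝒦'' + 𝒦'/r + b F = 0 on (0,∞) with 𝒦' bounded near 0 satisfies |𝒦(r)| ≤ C' (1 + (log r)²) for all r ≥ 1. -/
/-- Growth of the solution K of ΔK + b g_f = 0 when g_f ~ r^{-2}:
|K(r)| ≤ C' (1 + (log r)²) for r ≥ 1. -/
theorem stmt9 (b C : ℝ) (hC : 0 < C)
    (F : ℝ → ℝ) (hFcont : ContinuousOn F (Set.Ioi 0))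
    (hFsupp : ∀ r : ℝ, 0 < r → r < 1 → F r = 0)
    (hFdecay : ∀ r : ℝ, 1 ≤ r → |F r| ≤ C * r ^ (-2 : ℝ))
    (K K' K'' : ℝ → ℝ)
    (hK : ∀ r : ℝ, 0 < r → HasDerivAt K (K' r) r)
    (hK' : ∀ r : ℝ, 0 < r → HasDerivAt K' (K'' r) r)
    (hode : ∀ r : ℝ, 0 < r → K'' r + K' r / r + b * F r = 0)
    (hbdd : ∃ M : ℝ, ∀ r : ℝ, 0 < r → r ≤ 1 → |K' r| ≤ M) :
    ∃ C' > 0, ∀ r : ℝ, 1 ≤ r → |K r| ≤ C' * (1 + Real.log r ^ 2) := by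
  set A : ℝ := |K' 1| with hA
  set B : ℝ := |b| * C with hB
  have hA0 : 0 ≤ A := abs_nonneg _
  have hB0 : 0 ≤ B := mul_nonneg (abs_nonneg _) hC.le
  -- derivative of s ↦ s * K' s
  have hG : ∀ s : ℝ, 0 < s → HasDerivAt (fun t => t * K' t) (-(b * (s * F s))) s := by
    intro s hs
    have h : HasDerivAt (fun t => t * K' t) (1 * K' s + s * K'' s) s :=
      (hasDerivAt_id s).mul (hK' s hs)
    convert h using 1
    have ho := hode s hs
    have hs' : s ≠ 0 := ne_of_gt hs
    field_simp at ho
    ring_nf at ho ⊢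
    linarith
  -- continuity facts
  have hK'cont : ContinuousOn K' (Set.Ioi 0) := fun s hs =>
    ((hK' s hs).continuousAt).continuousWithinAt
  -- bound on r * K' r for r ≥ 1
  have hGbd : ∀ r : ℝ, 1 ≤ r → |r * K' r| ≤ A + B * Real.log r := by
    intro r hr
    have hsub : Set.uIcc (1:ℝ) r ⊆ Set.Ioi 0 := by
      rw [Set.uIcc_of_le hr]
      intro x hx
      exact lt_of_lt_of_le one_pos hx.1
    have hfc : ContinuousOn (fun s : ℝ => -(b * (s * F s))) (Set.uIcc 1 r) := by
      apply ContinuousOn.neg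
      exact (continuous_const.continuousOn).mul
        ((continuous_id.continuousOn).mul (hFcont.mono hsub))
    have hint : IntervalIntegrable (fun s : ℝ => -(b * (s * F s))) MeasureTheory.volume 1 r :=
      hfc.intervalIntegrable
    have hftc : ∫ s in (1:ℝ)..r, -(b * (s * F s)) = r * K' r - 1 * K' 1 := by
      exact intervalIntegral.integral_eq_sub_of_hasDerivAt
        (fun x hx => hG x (hsub hx)) hint
    have hbint : IntervalIntegrable (fun s : ℝ => B * (1 / s)) MeasureTheory.volume 1 r := by
      apply ContinuousOn.intervalIntegrable
      apply ContinuousOn.mul continuousOn_const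
      apply ContinuousOn.div continuousOn_const continuousOn_id
      intro x hx
      exact ne_of_gt (hsub hx)
    have habs : |∫ s in (1:ℝ)..r, -(b * (s * F s))| ≤ ∫ s in (1:ℝ)..r, B * (1 / s) := by
      apply intervalIntegral.abs_integral_le_integral_abs hr |>.trans
      apply intervalIntegral.integral_mono_on hr (hint.abs) hbint
      intro x hx
      have hx1 : 1 ≤ x := hx.1
      have hx0 : 0 < x := lt_of_lt_of_le one_pos hx1
      have : |(-(b * (x * F x)))| = |b| * (x * |F x|) := by
        rw [abs_neg, abs_mul, abs_mul, abs_of_pos hx0]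
      rw [this]
      have hF := hFdecay x hx1
      have hrx : x ^ (-2:ℝ) = 1 / x ^ 2 := by
        rw [show (-2:ℝ) = ((-2:ℤ):ℝ) by norm_num, Real.rpow_intCast]
        field_simp
      rw [hrx] at hF
      have h1 : x * |F x| ≤ C * (1/x) := by
        have := mul_le_mul_of_nonneg_left hF hx0.le
        calc x * |F x| ≤ x * (C * (1 / x ^ 2)) := this
          _ = C * (1/x) := by field_simp
      calc |b| * (x * |F x|) ≤ |b| * (C * (1/x)) :=
            mul_le_mul_of_nonneg_left h1 (abs_nonneg _)
        _ = B * (1/x) := by rw [hB]; ring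
    have hval : ∫ s in (1:ℝ)..r, B * (1 / s) = B * Real.log r := by
      rw [intervalIntegral.integral_const_mul, integral_one_div]
      · rw [div_one]
      · rw [Set.uIcc_of_le hr]
        intro hx
        linarith [hx.1]
    calc |r * K' r| = |1 * K' 1 + ∫ s in (1:ℝ)..r, -(b * (s * F s))| := by
          rw [hftc]; ring_nf
      _ ≤ |1 * K' 1| + |∫ s in (1:ℝ)..r, -(b * (s * F s))| := abs_add_le _ _
      _ ≤ A + B * Real.log r := by
          rw [one_mul]
          exact add_le_add le_rfl (habs.trans hval.le)
  -- bound on K' for s ≥ 1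
  have hK'bd : ∀ s : ℝ, 1 ≤ s → |K' s| ≤ (A + B * Real.log s) / s := by
    intro s hs
    have hs0 : 0 < s := lt_of_lt_of_le one_pos hs
    have := hGbd s hs
    rw [abs_mul, abs_of_pos hs0] at this
    rw [le_div_iff₀ hs0]
    linarith [this]
  refine ⟨|K 1| + A + B + 1, by positivity, ?_⟩
  intro r hr
  set L := Real.log r with hL
  have hL0 : 0 ≤ L := Real.log_nonneg hr
  have hsub : Set.uIcc (1:ℝ) r ⊆ Set.Ioi 0 := by
    rw [Set.uIcc_of_le hr]
    intro x hx
    exact lt_of_lt_of_le one_pos hx.1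
  -- FTC for K
  have hKint : IntervalIntegrable K' MeasureTheory.volume 1 r :=
    (hK'cont.mono hsub).intervalIntegrable
  have hftcK : ∫ s in (1:ℝ)..r, K' s = K r - K 1 :=
    intervalIntegral.integral_eq_sub_of_hasDerivAt (fun x hx => hK x (hsub hx)) hKint
  -- the bounding integrand
  have hgc : ContinuousOn (fun s : ℝ => (A + B * Real.log s) / s) (Set.uIcc 1 r) := by
    apply ContinuousOn.div
    · exact continuousOn_const.add (continuousOn_const.mul
        (Real.continuousOn_log.mono (fun x hx => ne_of_gt (hsub hx))))
    · exact continuousOn_id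
    · intro x hx; exact ne_of_gt (hsub hx)
  have hgint : IntervalIntegrable (fun s : ℝ => (A + B * Real.log s) / s)
      MeasureTheory.volume 1 r := hgc.intervalIntegrable
  have hHval : ∫ s in (1:ℝ)..r, (A + B * Real.log s) / s
      = A * L + B * L ^ 2 / 2 := by
    have hH : ∀ x ∈ Set.uIcc (1:ℝ) r,
        HasDerivAt (fun s => A * Real.log s + B * (Real.log s) ^ 2 / 2)
          ((A + B * Real.log x) / x) x := by
      intro x hx
      have hx0 : 0 < x := hsub hx
      have h1 : HasDerivAt (fun s : ℝ => A * Real.log s) (A * x⁻¹) x :=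
        (Real.hasDerivAt_log (ne_of_gt hx0)).const_mul A
      have h2 : HasDerivAt (fun s : ℝ => B * (Real.log s) ^ 2 / 2)
          (B * (2 * Real.log x ^ 1 * x⁻¹) / 2) x :=
        (((Real.hasDerivAt_log (ne_of_gt hx0)).pow 2).const_mul B).div_const 2
      have h3 : HasDerivAt (fun s => A * Real.log s + B * (Real.log s) ^ 2 / 2)
          (A * x⁻¹ + B * (2 * Real.log x ^ 1 * x⁻¹) / 2) x := h1.add h2
      convert h3 using 1
      ring
    rw [intervalIntegral.integral_eq_sub_of_hasDerivAt hH hgint]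
    simp [← hL]
  have habsK : |∫ s in (1:ℝ)..r, K' s| ≤ A * L + B * L ^ 2 / 2 := by
    rw [← hHval]
    apply intervalIntegral.abs_integral_le_integral_abs hr |>.trans
    apply intervalIntegral.integral_mono_on hr hKint.abs hgint
    intro x hx
    exact hK'bd x hx.1
  have : |K r| ≤ |K 1| + (A * L + B * L ^ 2 / 2) := by
    calc |K r| = |K 1 + ∫ s in (1:ℝ)..r, K' s| := by rw [hftcK]; ring_nf
      _ ≤ |K 1| + |∫ s in (1:ℝ)..r, K' s| := abs_add_le _ _
      _ ≤ |K 1| + (A * L + B * L ^ 2 / 2) := add_le_add le_rfl habsK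
  have hK1 : 0 ≤ |K 1| := abs_nonneg _
  nlinarith [sq_nonneg (L - 1), sq_nonneg L, mul_nonneg hB0 (sq_nonneg L),
    mul_nonneg hA0 (sq_nonneg (L-1)), mul_nonneg hK1 (sq_nonneg L)]
end

section
/- No regular expansion of the frequency: suppose φ₁ : (0,∞) → ℝ is C², solves φ₁'' + φ₁'/r - g(r) = Ω₁ for all r > 0 with g continuous, g ≥ 0, g not identically zero, ∫₀^∞ g(r) r dr < ∞, φ₁' bounded near 0, and φ₁'(r) bounded as r → ∞. Then Ω₁ = 0. -/
open MeasureTheory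

/-- No regular expansion of the frequency: the solvability of
φ₁'' + φ₁'/r - g = Ω₁ with bounded derivative forces Ω₁ = 0. -/
theorem stmt13 (g : ℝ → ℝ) (Ω₁ : ℝ)
    (hgcont : ContinuousOn g (Set.Ioi 0))
    (hgpos : ∀ r : ℝ, 0 < r → 0 ≤ g r)
    (hgne : ∃ r : ℝ, 0 < r ∧ g r ≠ 0)
    (hgint : IntegrableOn (fun r => g r * r) (Set.Ioi 0))
    (φ φ' φ'' : ℝ → ℝ)
    (hd1 : ∀ r : ℝ, 0 < r → HasDerivAt φ (φ' r) r)
    (hd2 : ∀ r : ℝ, 0 < r → HasDerivAt φ' (φ'' r) r)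
    (hode : ∀ r : ℝ, 0 < r → φ'' r + φ' r / r - g r = Ω₁)
    (hbdd0 : ∃ M : ℝ, ∀ r : ℝ, 0 < r → r ≤ 1 → |φ' r| ≤ M)
    (hbddinf : ∃ M : ℝ, ∀ r : ℝ, 1 ≤ r → |φ' r| ≤ M) :
    Ω₁ = 0 := by
  obtain ⟨M, hM⟩ := hbddinf
  set ψ : ℝ → ℝ := fun r => r * φ' r with hψ
  -- derivative of ψ
  have hψd : ∀ x : ℝ, 0 < x → HasDerivAt ψ (Ω₁ * x + g x * x) x := by
    intro x hx
    have h := (hasDerivAt_id x).mul (hd2 x hx)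
    have heq : φ' x + x * φ'' x = Ω₁ * x + g x * x := by
      have ho := hode x hx
      have hx0 : x ≠ 0 := ne_of_gt hx
      field_simp at ho ⊢
      nlinarith [ho]
    have h' : HasDerivAt ψ (1 * φ' x + id x * φ'' x) x := h
    simpa [heq] using h'
  set C : ℝ := ∫ s in Set.Ioi (0:ℝ), g s * s with hC
  have hC0 : 0 ≤ C := by
    apply setIntegral_nonneg measurableSet_Ioi
    intro s hs; exact mul_nonneg (hgpos s hs) (le_of_lt hs)
  -- key inequality
  have key : ∀ r : ℝ, 1 ≤ r → |Ω₁| * (r ^ 2 - 1) / 2 ≤ M * r + |ψ 1| + C := by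
    intro r hr
    have hsub : Set.uIcc (1:ℝ) r ⊆ Set.Ioi 0 := by
      rw [Set.uIcc_of_le hr]
      intro x hx; exact lt_of_lt_of_le one_pos hx.1
    have hcont : ContinuousOn (fun s => Ω₁ * s + g s * s) (Set.uIcc 1 r) := by
      apply ContinuousOn.add
      · exact (continuous_const.mul continuous_id).continuousOn
      · exact ((hgcont.mono hsub).mul continuousOn_id)
    have hii : IntervalIntegrable (fun s => Ω₁ * s + g s * s) volume 1 r :=
      hcont.intervalIntegrable
    have hftc : ∫ s in (1:ℝ)..r, (Ω₁ * s + g s * s) = ψ r - ψ 1 :=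
      intervalIntegral.integral_eq_sub_of_hasDerivAt
        (fun x hx => hψd x (hsub hx)) hii
    have hiiG : IntervalIntegrable (fun s => g s * s) volume 1 r :=
      ((hgcont.mono hsub).mul continuousOn_id).intervalIntegrable
    have hiiL : IntervalIntegrable (fun s : ℝ => Ω₁ * s) volume 1 r :=
      (continuous_const.mul continuous_id).intervalIntegrable _ _
    have hsplit : ∫ s in (1:ℝ)..r, (Ω₁ * s + g s * s)
        = Ω₁ * ((r ^ 2 - 1 ^ 2) / 2) + ∫ s in (1:ℝ)..r, g s * s := by
      rw [intervalIntegral.integral_add hiiL hiiG, intervalIntegral.integral_const_mul,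
        integral_id]
    set I : ℝ := ∫ s in (1:ℝ)..r, g s * s with hI
    have hInn : 0 ≤ I := by
      apply intervalIntegral.integral_nonneg hr
      intro s hs
      have h0 : 0 < s := by rcases hs with ⟨h, _⟩; linarith
      exact mul_nonneg (hgpos s h0) h0.le
    have hIC : I ≤ C := by
      rw [hI, intervalIntegral.integral_of_le hr]
      apply setIntegral_mono_set hgint
      · exact Filter.eventually_of_mem (ae_restrict_mem measurableSet_Ioi)
          (fun s hs => mul_nonneg (hgpos s hs) (le_of_lt hs))
      · exact HasSubset.Subset.eventuallyLE
          (fun s hs => lt_of_lt_of_le one_pos hs.1.le)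
    have hψr : ψ r - ψ 1 = Ω₁ * ((r ^ 2 - 1) / 2) + I := by
      rw [← hftc, hsplit]; norm_num
    have hψrb : |ψ r| ≤ M * r := by
      have := hM r hr
      rw [hψ]
      calc |r * φ' r| = r * |φ' r| := by
            rw [abs_mul, abs_of_nonneg (le_trans zero_le_one hr)]
        _ ≤ r * M := by
            exact mul_le_mul_of_nonneg_left this (le_trans zero_le_one hr)
        _ = M * r := mul_comm r M
    have h1 := abs_le.mp hψrb
    have h2 := abs_le.mp (le_refl |ψ 1|)
    rcases le_or_gt 0 Ω₁ with hΩ | hΩ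
    · rw [abs_of_nonneg hΩ]
      nlinarith [neg_abs_le (ψ 1)]
    · rw [abs_of_neg hΩ]
      nlinarith [le_abs_self (ψ 1)]
  by_contra hne
  have ha : 0 < |Ω₁| := abs_pos.mpr hne
  set K : ℝ := |M| + |ψ 1| + C with hK
  set r : ℝ := max 1 ((2 * K + 2 * |M|) / |Ω₁| + 2) with hr
  have hr1 : (1:ℝ) ≤ r := le_max_left _ _
  have hr2 : (2 * K + 2 * |M|) / |Ω₁| + 2 ≤ r := le_max_right _ _
  have hK0 : 0 ≤ K := by positivity
  have hkey := key r hr1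
  have hdiv : (2 * K + 2 * |M|) ≤ |Ω₁| * ((2 * K + 2 * |M|) / |Ω₁|) := by
    rw [mul_div_cancel₀ _ (ne_of_gt ha)]
  have hMabs : M ≤ |M| := le_abs_self M
  have hr0 : (0:ℝ) ≤ r := le_trans zero_le_one hr1
  have h5 : |Ω₁| * ((2 * K + 2 * |M|) / |Ω₁| + 2) ≤ |Ω₁| * r :=
    mul_le_mul_of_nonneg_left hr2 ha.le
  have h6 : 2 * K + 2 * |M| + 2 * |Ω₁| ≤ |Ω₁| * r := by
    rw [mul_add] at h5; linarith [hdiv]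
  have h7 : (2 * K + 2 * |M| + 2 * |Ω₁|) * r ≤ (|Ω₁| * r) * r :=
    mul_le_mul_of_nonneg_right h6 hr0
  have h9 : (2 * K + 2 * |Ω₁|) ≤ (2 * K + 2 * |Ω₁|) * r :=
    le_mul_of_one_le_right (by positivity) hr1
  have h10 : M * r ≤ |M| * r := mul_le_mul_of_nonneg_right hMabs hr0
  have habsM : (0:ℝ) ≤ |M| := abs_nonneg M
  nlinarith [hkey, h7, h9, h10, sq_nonneg r, mul_pos ha (lt_of_lt_of_le one_pos hr1)]
end

section
/- Weighted L² bound for the resolvent away from the unit ball: let γ ∈ ℝ and define for f ∈ L² on (0,∞) with measure r dr, u(r) = (1/r)∫₀^r e^{s-r} f(s) s ds. Then there is C(γ) such that (∫₁^∞ |u(r)|² (1+r²)^γ r dr)^{1/2} ≤ C(γ) (∫₀^∞ |f(r)|² (1+r²)^γ r dr)^{1/2}. -/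
open MeasureTheory intervalIntegral Set Real
open scoped ENNReal

private lemma lint_neg (h : ℝ → ℝ≥0∞) : ∫⁻ x, h (-x) = ∫⁻ x, h x := by
  have e := lintegral_map_equiv (μ := (volume : Measure ℝ)) h (MeasurableEquiv.neg ℝ)
  have hm : Measure.map (⇑(MeasurableEquiv.neg ℝ)) (volume : Measure ℝ) = volume := by
    have : ⇑(MeasurableEquiv.neg ℝ) = (Neg.neg : ℝ → ℝ) := rfl
    rw [this]
    exact Measure.map_neg_eq_self (volume : Measure ℝ)
  rw [hm] at e
  exact e.symm

private lemma lint_shift (h : ℝ → ℝ≥0∞) (c : ℝ) : ∫⁻ x, h (x - c) = ∫⁻ x, h x :=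
  lintegral_sub_right_eq_self h c

private lemma shiftIci (s : ℝ) (h : ℝ → ℝ≥0∞) :
    ∫⁻ r in Ici s, h (r - s) = ∫⁻ z in Ici 0, h z := by
  rw [← lintegral_indicator measurableSet_Ici (fun r => h (r - s)), ← lintegral_indicator measurableSet_Ici h]
  have : ∀ r : ℝ, (Ici s).indicator (fun r => h (r - s)) r
      = (Ici (0:ℝ)).indicator h (r - s) := by
    intro r
    by_cases hr : r ∈ Ici s
    · rw [indicator_of_mem hr, indicator_of_mem (by simpa [sub_nonneg] using hr)]
    · rw [indicator_of_notMem hr, indicator_of_notMem (by simp only [mem_Ici, sub_nonneg] at hr ⊢; exact hr)]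
  simp_rw [this]
  exact lint_shift _ s

private lemma reflIoc (r : ℝ) (h : ℝ → ℝ≥0∞) :
    ∫⁻ x in Ioc 0 r, h (r - x) ≤ ∫⁻ z in Ici 0, h z := by
  rw [← lintegral_indicator measurableSet_Ioc (fun x => h (r - x))]
  have e1 : ∀ x : ℝ, (Ioc (0:ℝ) r).indicator (fun x => h (r - x)) x
      = (Ico (0:ℝ) r).indicator h (r - x) := by
    intro x
    by_cases hx : x ∈ Ioc (0:ℝ) r
    · rw [indicator_of_mem hx, indicator_of_mem]
      obtain ⟨h1, h2⟩ := hx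
      exact ⟨by linarith, by linarith⟩
    · rw [indicator_of_notMem hx, indicator_of_notMem]
      simp only [mem_Ioc, not_and_or, not_le, not_lt] at hx
      simp only [mem_Ico, not_and_or, not_le, not_lt]
      rcases hx with h1 | h2
      · right; linarith
      · left; linarith
  simp_rw [e1]
  have e2 : ∀ x : ℝ, (Ico (0:ℝ) r).indicator h (r - x)
      = (fun z => (Ico (0:ℝ) r).indicator h (-z)) (x - r) := by
    intro x; simp [neg_sub]
  simp_rw [e2]
  rw [lint_shift (fun z => (Ico (0:ℝ) r).indicator h (-z)) r]
  rw [lint_neg (fun z => (Ico (0:ℝ) r).indicator h z)]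
  rw [lintegral_indicator measurableSet_Ico h]
  exact lintegral_mono_set (Ico_subset_Ici_self.trans (Ici_subset_Ici.mpr le_rfl))

private lemma wineq (γ r s : ℝ) (hs : 0 ≤ s) (hsr : s ≤ r) :
    (1 + r^2) ^ (γ/2) ≤ 2^(|γ|/2) * ((1 + (r-s)^2) ^ (|γ|/2) * (1 + s^2) ^ (γ/2)) := by
  have h1r2 : (0:ℝ) < 1 + r^2 := by positivity
  have h1s2 : (0:ℝ) < 1 + s^2 := by positivity
  have h1d2 : (0:ℝ) < 1 + (r-s)^2 := by positivity
  rcases le_or_gt 0 γ with hγ | hγ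
  · rw [abs_of_nonneg hγ]
    have hbase : 1 + r^2 ≤ 2 * ((1 + (r-s)^2) * (1 + s^2)) := by nlinarith [sq_nonneg (r - 2*s), sq_nonneg ((r-s)*s)]
    calc (1 + r^2) ^ (γ/2) ≤ (2 * ((1 + (r-s)^2) * (1 + s^2))) ^ (γ/2) :=
          Real.rpow_le_rpow (le_of_lt h1r2) hbase (by positivity)
      _ = 2^(γ/2) * ((1 + (r-s)^2) ^ (γ/2) * (1 + s^2) ^ (γ/2)) := by
          rw [Real.mul_rpow (by norm_num) (by positivity), Real.mul_rpow (le_of_lt h1d2) (le_of_lt h1s2)]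
  · rw [abs_of_neg hγ]
    set p := -γ/2 with hp
    have hppos : 0 < p := by rw [hp]; linarith
    have hbase : 1 + s^2 ≤ 2 * ((1 + (r-s)^2) * (1 + r^2)) := by nlinarith [sq_nonneg s, sq_nonneg (r-s), sq_nonneg (s*(r-s)), mul_nonneg (mul_nonneg hs hs) (sq_nonneg (r-s)), sq_abs r]
    have key : (1 + s^2) ^ p ≤ 2^p * ((1 + (r-s)^2) ^ p * (1 + r^2) ^ p) := by
      calc (1 + s^2) ^ p ≤ (2 * ((1 + (r-s)^2) * (1 + r^2))) ^ p :=
            Real.rpow_le_rpow (le_of_lt h1s2) hbase (le_of_lt hppos)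
        _ = 2^p * ((1 + (r-s)^2) ^ p * (1 + r^2) ^ p) := by
            rw [Real.mul_rpow (by norm_num) (by positivity), Real.mul_rpow (le_of_lt h1d2) (le_of_lt h1r2)]
    have hγ2 : γ/2 = -p := by rw [hp]; ring
    rw [hγ2]
    rw [Real.rpow_neg (le_of_lt h1r2), Real.rpow_neg (le_of_lt h1s2)]
    have hA : (0:ℝ) < (1 + r^2) ^ p := Real.rpow_pos_of_pos h1r2 p
    have hS : (0:ℝ) < (1 + s^2) ^ p := Real.rpow_pos_of_pos h1s2 p
    have hD : (0:ℝ) < (1 + (r-s)^2) ^ p := Real.rpow_pos_of_pos h1d2 p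
    have hT : (0:ℝ) < (2:ℝ) ^ p := Real.rpow_pos_of_pos (by norm_num) p
    calc ((1 + r^2) ^ p)⁻¹
        = (1 + s^2)^p * ((1 + s^2)^p)⁻¹ * ((1 + r^2)^p)⁻¹ := by
          field_simp
      _ ≤ (2^p * ((1 + (r-s)^2)^p * (1 + r^2)^p)) * ((1 + s^2)^p)⁻¹ * ((1 + r^2)^p)⁻¹ := by
          gcongr
      _ = 2^p * ((1 + (r-s)^2)^p * ((1 + s^2)^p)⁻¹) := by
          field_simp

private lemma Kintegrable (γ : ℝ) :
    IntegrableOn (fun z => Real.exp (-z) * (1 + z^2) ^ (|γ|/2)) (Ici (0:ℝ)) := by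
  set n := ⌈|γ|⌉₊ with hn
  have hmaj : IntegrableOn (fun z => Real.exp (-z) * (1 + z)^n) (Ici (0:ℝ)) := by
    rw [integrableOn_Ici_iff_integrableOn_Ioi]
    have : ∀ z : ℝ, Real.exp (-z) * (1 + z)^n
        = ∑ k ∈ Finset.range (n+1), (n.choose k : ℝ) * (z ^ k * Real.exp (-z)) := by
      intro z
      rw [add_comm (1:ℝ) z, add_pow, Finset.mul_sum]
      apply Finset.sum_congr rfl
      intro k _
      simp only [one_pow, mul_one]
      ring
    simp_rw [this]
    apply integrable_finset_sum
    intro k _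
    apply Integrable.const_mul
    have h := Real.GammaIntegral_convergent (s := (k:ℝ) + 1) (by positivity)
    apply h.congr_fun ?_ measurableSet_Ioi
    intro x hx
    simp only
    rw [show ((k:ℝ) + 1 - 1) = (k:ℝ) by ring, Real.rpow_natCast]
    ring
  apply hmaj.integrable.mono' ?mm ?bd
  case mm =>
    apply Measurable.aestronglyMeasurable
    fun_prop
  case bd =>
    filter_upwards [ae_restrict_mem measurableSet_Ici] with z hz
    have hz0 : (0:ℝ) ≤ z := hz
    have h1 : (1 + z^2 : ℝ) ^ (|γ|/2) ≤ (1 + z)^n := by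
      have e1 : (1 + z^2 : ℝ) ≤ (1 + z)^2 := by nlinarith
      have e2 : (1 + z^2 : ℝ) ^ (|γ|/2) ≤ ((1+z)^2 : ℝ) ^ (|γ|/2) :=
        Real.rpow_le_rpow (by positivity) e1 (by positivity)
      have e3 : ((1+z)^2 : ℝ) ^ (|γ|/2) = (1+z) ^ |γ| := by
        rw [← Real.rpow_natCast (1+z) 2, ← Real.rpow_mul (by linarith)]
        congr 1
        push_cast
        ring
      have e4 : (1+z) ^ |γ| ≤ (1+z) ^ (n:ℝ) :=
        Real.rpow_le_rpow_of_exponent_le (by linarith) (Nat.le_ceil _)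
      rw [Real.rpow_natCast] at e4
      calc (1 + z^2 : ℝ) ^ (|γ|/2) ≤ ((1+z)^2 : ℝ) ^ (|γ|/2) := e2
        _ = (1+z) ^ |γ| := e3
        _ ≤ (1+z)^n := e4
    have hrpos : (0:ℝ) ≤ (1 + z^2 : ℝ) ^ (|γ|/2) := Real.rpow_nonneg (by positivity) _
    rw [Real.norm_eq_abs, abs_of_nonneg (by positivity)]
    exact mul_le_mul_of_nonneg_left h1 (le_of_lt (Real.exp_pos _))

private lemma sqrt_half_sq (x : ℝ) (hx : 0 ≤ x) : (x ^ ((1:ℝ)/2)) ^ 2 = x := by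
  rw [← Real.rpow_natCast (x ^ ((1:ℝ)/2)) 2, ← Real.rpow_mul hx]
  norm_num

private lemma ennhalf_sq (x : ℝ≥0∞) : (x ^ ((1:ℝ)/2)) ^ (2:ℕ) = x := by
  rw [← ENNReal.rpow_natCast (x ^ ((1:ℝ)/2)) 2, ← ENNReal.rpow_mul]
  norm_num

private lemma ennhalf_rpow2 (x : ℝ≥0∞) : (x ^ ((1:ℝ)/2)) ^ (2:ℝ) = x := by
  rw [← ENNReal.rpow_mul]
  norm_num

/-- Weighted L² bound away from the unit ball for the resolvent
u(r) = (1/r)∫₀^r e^{s-r} f(s) s ds. -/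
theorem stmt16 (γ : ℝ) :
    ∃ C > 0, ∀ f : ℝ → ℝ, Measurable f →
      IntegrableOn (fun r => (f r) ^ 2 * (1 + r ^ 2) ^ γ * r) (Set.Ioi 0) →
      Real.sqrt (∫ r in Set.Ioi (1:ℝ),
          ((1 / r) * ∫ s in (0:ℝ)..r, Real.exp (s - r) * f s * s) ^ 2 *
            (1 + r ^ 2) ^ γ * r) ≤
        C * Real.sqrt (∫ r in Set.Ioi (0:ℝ), (f r) ^ 2 * (1 + r ^ 2) ^ γ * r) := by
  classical
  set k : ℝ → ℝ := fun z => Real.exp (-z) * (1 + z^2) ^ (|γ|/2) with hkdef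
  have hkmeas : Measurable k := by fun_prop
  have hknonneg : ∀ z, 0 ≤ k z := fun z => by
    have := Real.exp_pos (-z); have : (0:ℝ) ≤ (1 + z^2) ^ (|γ|/2) := Real.rpow_nonneg (by positivity) _
    positivity
  set K : ℝ≥0∞ := ∫⁻ z in Ici (0:ℝ), ENNReal.ofReal (k z) with hKdef
  have hKne : K ≠ ⊤ := by
    have h := Kintegrable γ
    have h2 := h.2
    refine ne_of_lt (lt_of_le_of_lt ?_ h2)
    refine lintegral_mono fun z => ?_
    simp only
    rw [Real.enorm_eq_ofReal_abs]
    exact ENNReal.ofReal_le_ofReal (le_abs_self _)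
  set C₀ : ℝ := 2 ^ (|γ|/2) with hC₀def
  have hC₀pos : 0 < C₀ := Real.rpow_pos_of_pos (by norm_num) _
  refine ⟨C₀ * K.toReal + 1, by positivity, fun f hf hint => ?_⟩
  set g : ℝ → ℝ := fun s => |f s| * (1 + s^2) ^ (γ/2) * s ^ ((1:ℝ)/2) with hgdef
  have hgmeas : Measurable g := by fun_prop
  have hgnonneg : ∀ s, 0 ≤ g s := fun s => by
    have : (0:ℝ) ≤ (1 + s^2) ^ (γ/2) := Real.rpow_nonneg (by positivity) _
    have : (0:ℝ) ≤ s ^ ((1:ℝ)/2) := by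
      rcases le_or_gt 0 s with h | h
      · exact Real.rpow_nonneg h _
      · rw [Real.rpow_def_of_neg h, show (1:ℝ)/2*π = π/2 by ring]
        simp [Real.cos_pi_div_two]
    positivity
  -- RHS lintegral
  set B : ℝ≥0∞ := ∫⁻ r in Ioi (0:ℝ), ENNReal.ofReal (f r ^ 2 * (1 + r^2) ^ γ * r) with hBdef
  have hBne : B ≠ ⊤ := by
    refine ne_of_lt (lt_of_le_of_lt ?_ hint.2)
    refine lintegral_mono fun r => ?_
    calc ENNReal.ofReal (f r ^ 2 * (1 + r^2) ^ γ * r)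
        ≤ ENNReal.ofReal |f r ^ 2 * (1 + r^2) ^ γ * r| := ENNReal.ofReal_le_ofReal (le_abs_self _)
      _ = ‖f r ^ 2 * (1 + r^2) ^ γ * r‖ₑ := (Real.enorm_eq_ofReal_abs _).symm
  have hRHS : ∫ r in Ioi (0:ℝ), f r ^ 2 * (1 + r^2) ^ γ * r = B.toReal := by
    rw [integral_eq_lintegral_of_nonneg_ae ?_ hint.1]
    filter_upwards [ae_restrict_mem measurableSet_Ioi] with r hr
    have : (0:ℝ) ≤ (1 + r^2) ^ γ := Real.rpow_nonneg (by positivity) _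
    have hr0 : (0:ℝ) < r := hr
    positivity
  -- LHS case split
  set u : ℝ → ℝ := fun r =>
    ((1 / r) * ∫ s in (0:ℝ)..r, Real.exp (s - r) * f s * s) ^ 2 * (1 + r^2) ^ γ * r with hudef
  by_cases hLI : IntegrableOn u (Ioi 1)
  swap
  · rw [integral_undef hLI, Real.sqrt_zero]
    positivity
  set A : ℝ≥0∞ := ∫⁻ r in Ioi (1:ℝ), ENNReal.ofReal (u r) with hAdef
  have hLHS : ∫ r in Ioi (1:ℝ), u r = A.toReal := by
    rw [integral_eq_lintegral_of_nonneg_ae ?_ hLI.1]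
    filter_upwards [ae_restrict_mem measurableSet_Ioi] with r hr
    have : (0:ℝ) ≤ (1 + r^2) ^ γ := Real.rpow_nonneg (by positivity) _
    have hr0 : (0:ℝ) < r := lt_trans one_pos hr
    rw [hudef]
    positivity
  -- product kernel
  set Q : ℝ × ℝ → ℝ≥0∞ := fun p =>
    ({q : ℝ × ℝ | 0 < q.2 ∧ q.2 ≤ q.1}).indicator
      (fun q => ENNReal.ofReal (k (q.1 - q.2)) * (ENNReal.ofReal (g q.2)) ^ 2) p with hQdef
  have hSmeas : MeasurableSet {q : ℝ × ℝ | 0 < q.2 ∧ q.2 ≤ q.1} :=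
    (measurableSet_lt measurable_const measurable_snd).inter
      (measurableSet_le measurable_snd measurable_fst)
  have hQmeas : Measurable Q := by
    refine Measurable.indicator ?_ hSmeas
    fun_prop
  -- main pointwise bound
  have hpt : ∀ r ∈ Ioi (1:ℝ),
      ENNReal.ofReal (u r) ≤ (ENNReal.ofReal (C₀^2) * K) * ∫⁻ s, Q (r, s) := by
    intro r hr
    have hr1 : (1:ℝ) < r := hr
    have hr0 : (0:ℝ) < r := lt_trans one_pos hr1
    set I : ℝ := ∫ s in (0:ℝ)..r, Real.exp (s - r) * f s * s with hIdef
    set J : ℝ≥0∞ := ∫⁻ s in Ioc (0:ℝ) r, ENNReal.ofReal |Real.exp (s - r) * f s * s| with hJdef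
    have hIJ : ENNReal.ofReal |I| ≤ J := by
      rw [hIdef, intervalIntegral.integral_of_le (le_of_lt hr0)]
      rw [← Real.enorm_eq_ofReal_abs]
      refine (enorm_integral_le_lintegral_enorm _).trans ?_
      refine lintegral_mono fun s => ?_
      rw [Real.enorm_eq_ofReal_abs]
    set W : ℝ := ((1 + r^2) ^ γ / r) ^ ((1:ℝ)/2) with hWdef
    have hWnonneg : 0 ≤ W := Real.rpow_nonneg (div_nonneg (Real.rpow_nonneg (by positivity) _) hr0.le) _
    have hW2 : W ^ 2 = (1 + r^2) ^ γ / r :=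
      sqrt_half_sq _ (div_nonneg (Real.rpow_nonneg (by positivity) _) hr0.le)
    have hu : u r = (|I| * W) ^ 2 := by
      have habsW : (|I| * W) ^ 2 = I^2 * ((1 + r^2) ^ γ / r) := by
        rw [mul_pow, sq_abs, hW2]
      rw [hudef]
      simp only
      rw [habsW, ← hIdef]
      field_simp
    set M : ℝ≥0∞ := ∫⁻ s in Ioc (0:ℝ) r, ENNReal.ofReal (k (r - s) * g s) with hMdef
    -- step: ofReal (u r) ≤ (ofReal C₀ * M)^2
    have step1 : ENNReal.ofReal (u r) ≤ (ENNReal.ofReal C₀ * M) ^ 2 := by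
      rw [hu, ENNReal.ofReal_pow (by positivity), ENNReal.ofReal_mul (abs_nonneg _)]
      have hJW : (ENNReal.ofReal |I| * ENNReal.ofReal W) ≤ ENNReal.ofReal C₀ * M := by
        refine le_trans (mul_le_mul_left hIJ _) ?_
        rw [hJdef, ← lintegral_mul_const' (ENNReal.ofReal W) _ ENNReal.ofReal_ne_top]
        have hmono : ∫⁻ s in Ioc (0:ℝ) r,
            ENNReal.ofReal |Real.exp (s - r) * f s * s| * ENNReal.ofReal W
            ≤ ∫⁻ s in Ioc (0:ℝ) r, ENNReal.ofReal (C₀ * (k (r - s) * g s)) := by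
          refine setLIntegral_mono' measurableSet_Ioc fun s hs => ?_
          rw [← ENNReal.ofReal_mul (abs_nonneg _)]
          refine ENNReal.ofReal_le_ofReal ?_
          obtain ⟨hs0, hsr⟩ := hs
          -- pointwise real inequality
          have habs : |Real.exp (s - r) * f s * s| = Real.exp (s - r) * |f s| * s := by
            rw [abs_mul, abs_mul, abs_of_pos (Real.exp_pos _), abs_of_pos hs0]
          have hWsplit : W = (1 + r^2) ^ (γ/2) / r ^ ((1:ℝ)/2) := by
            rw [hWdef, Real.div_rpow (Real.rpow_nonneg (by positivity) _) hr0.le,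
              ← Real.rpow_mul (by positivity)]
            ring_nf
          have hsr2 : s / r ^ ((1:ℝ)/2) ≤ s ^ ((1:ℝ)/2) := by
            rw [div_le_iff₀ (Real.rpow_pos_of_pos hr0 _)]
            calc s = s ^ ((1:ℝ)/2) * s ^ ((1:ℝ)/2) := by
                  rw [← Real.rpow_add hs0]; norm_num
              _ ≤ s ^ ((1:ℝ)/2) * r ^ ((1:ℝ)/2) := by
                  refine mul_le_mul_of_nonneg_left ?_ (Real.rpow_nonneg hs0.le _)
                  exact Real.rpow_le_rpow hs0.le hsr (by norm_num)
          have hwq := wineq γ r s hs0.le hsr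
          rw [habs]
          calc Real.exp (s - r) * |f s| * s * W
              = (Real.exp (s - r) * |f s|) * ((1 + r^2) ^ (γ/2) * (s / r ^ ((1:ℝ)/2))) := by
                rw [hWsplit]; ring
            _ ≤ (Real.exp (s - r) * |f s|) *
                ((C₀ * ((1 + (r-s)^2) ^ (|γ|/2) * (1 + s^2) ^ (γ/2))) * s ^ ((1:ℝ)/2)) := by
                refine mul_le_mul_of_nonneg_left ?_ (by positivity)
                refine mul_le_mul hwq hsr2 (by positivity) (by positivity)
            _ = C₀ * (k (r - s) * g s) := by
                rw [hkdef, hgdef]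
                simp only
                rw [show -(r - s) = s - r by ring]
                ring
        refine hmono.trans ?_
        have : ∫⁻ s in Ioc (0:ℝ) r, ENNReal.ofReal (C₀ * (k (r - s) * g s))
            = ENNReal.ofReal C₀ * M := by
          rw [hMdef, ← lintegral_const_mul' _ _ ENNReal.ofReal_ne_top]
          refine lintegral_congr fun s => ?_
          rw [ENNReal.ofReal_mul hC₀pos.le]
        rw [this]
      exact pow_le_pow_left' hJW 2
    -- Cauchy-Schwarz
    set P : ℝ≥0∞ := ∫⁻ s in Ioc (0:ℝ) r, ENNReal.ofReal (k (r - s)) with hPdef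
    set N : ℝ≥0∞ := ∫⁻ s in Ioc (0:ℝ) r,
      ENNReal.ofReal (k (r - s)) * (ENNReal.ofReal (g s)) ^ 2 with hNdef
    have hCS : M ^ 2 ≤ P * N := by
      set φ : ℝ → ℝ≥0∞ := fun s => (ENNReal.ofReal (k (r - s))) ^ ((1:ℝ)/2) with hφdef
      set ψ : ℝ → ℝ≥0∞ := fun s => φ s * ENNReal.ofReal (g s) with hψdef
      have hφmeas : Measurable φ := by fun_prop
      have hψmeas : Measurable ψ := by fun_prop
      have hconj : Real.HolderConjugate 2 2 := Real.HolderConjugate.two_two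
      have hH := ENNReal.lintegral_mul_le_Lp_mul_Lq (volume.restrict (Ioc (0:ℝ) r)) hconj
        hφmeas.aemeasurable hψmeas.aemeasurable
      have hx : ∀ x : ℝ≥0∞, x ^ ((1:ℝ)/2) * x ^ ((1:ℝ)/2) = x := fun x => by
        rw [← ENNReal.rpow_add_of_nonneg _ _ (by norm_num) (by norm_num)]
        norm_num
      have hMeq : M = ∫⁻ s in Ioc (0:ℝ) r, (φ * ψ) s := by
        refine lintegral_congr fun s => ?_
        calc ENNReal.ofReal (k (r - s) * g s)
            = ENNReal.ofReal (k (r - s)) * ENNReal.ofReal (g s) :=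
              ENNReal.ofReal_mul (hknonneg _)
          _ = (φ s * φ s) * ENNReal.ofReal (g s) := by rw [hx (ENNReal.ofReal (k (r - s)))]
          _ = (φ * ψ) s := by rw [Pi.mul_apply]; ring
      have hφ2 : ∀ s, φ s ^ (2:ℝ) = ENNReal.ofReal (k (r - s)) := fun s => ennhalf_rpow2 _
      have hψ2 : ∀ s, ψ s ^ (2:ℝ) = ENNReal.ofReal (k (r - s)) * (ENNReal.ofReal (g s)) ^ 2 := by
        intro s
        rw [hψdef]
        simp only
        rw [ENNReal.mul_rpow_of_nonneg _ _ (by norm_num), hφ2 s]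
        congr 1
        rw [← ENNReal.rpow_natCast (ENNReal.ofReal (g s)) 2]
        norm_num
      simp_rw [hφ2, hψ2] at hH
      rw [hMeq]
      calc (∫⁻ s in Ioc (0:ℝ) r, (φ * ψ) s) ^ 2
          ≤ (P ^ ((1:ℝ)/2) * N ^ ((1:ℝ)/2)) ^ 2 := by
            refine pow_le_pow_left' ?_ 2
            convert hH using 2 <;> norm_num
        _ = (P ^ ((1:ℝ)/2)) ^ (2:ℕ) * (N ^ ((1:ℝ)/2)) ^ (2:ℕ) := by rw [mul_pow]
        _ = P * N := by rw [ennhalf_sq, ennhalf_sq]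
    have hPK : P ≤ K := by
      rw [hPdef, hKdef]
      exact reflIoc r (fun z => ENNReal.ofReal (k z))
    have hNQ : N = ∫⁻ s, Q (r, s) := by
      rw [hNdef, ← lintegral_indicator measurableSet_Ioc]
      refine lintegral_congr fun s => ?_
      simp only [hQdef]
      by_cases hs : s ∈ Ioc (0:ℝ) r
      · rw [indicator_of_mem hs,
          indicator_of_mem (show (r, s) ∈ {q : ℝ × ℝ | 0 < q.2 ∧ q.2 ≤ q.1} from ⟨hs.1, hs.2⟩)]
      · rw [indicator_of_notMem hs, indicator_of_notMem]
        simpa [mem_Ioc] using hs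
    calc ENNReal.ofReal (u r) ≤ (ENNReal.ofReal C₀ * M) ^ 2 := step1
      _ = ENNReal.ofReal C₀ ^ 2 * M ^ 2 := by rw [mul_pow]
      _ ≤ ENNReal.ofReal C₀ ^ 2 * (P * N) := mul_le_mul_right hCS _
      _ ≤ ENNReal.ofReal C₀ ^ 2 * (K * N) := by
          exact mul_le_mul_right (mul_le_mul_left hPK _) _
      _ = (ENNReal.ofReal (C₀^2) * K) * ∫⁻ s, Q (r, s) := by
          rw [← ENNReal.ofReal_pow hC₀pos.le, hNQ, mul_assoc]
  -- integrate pointwise bound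
  have hA1 : A ≤ (ENNReal.ofReal (C₀^2) * K) * ∫⁻ r in Ioi (1:ℝ), ∫⁻ s, Q (r, s) := by
    rw [hAdef, ← lintegral_const_mul' _ _ (ENNReal.mul_ne_top ENNReal.ofReal_ne_top hKne)]
    exact setLIntegral_mono' measurableSet_Ioi hpt
  -- Tonelli
  have hT : ∫⁻ r in Ioi (1:ℝ), ∫⁻ s, Q (r, s) ≤ K * B := by
    have hswap : ∫⁻ r, ∫⁻ s, Q (r, s) = ∫⁻ s, ∫⁻ r, Q (r, s) :=
      lintegral_lintegral_swap hQmeas.aemeasurable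
    refine le_trans (setLIntegral_le_lintegral _ _) ?_
    rw [hswap]
    have hinner : ∀ s : ℝ, ∫⁻ r, Q (r, s)
        ≤ (Ioi (0:ℝ)).indicator (fun s => K * ENNReal.ofReal (f s ^ 2 * (1 + s^2) ^ γ * s)) s := by
      intro s
      by_cases hs : 0 < s
      · have hb : ∀ r : ℝ, Q (r, s)
            ≤ (ENNReal.ofReal (g s)) ^ 2 * (Ici s).indicator (fun r => ENNReal.ofReal (k (r - s))) r := by
          intro r
          simp only [hQdef]
          by_cases hmem : (r, s) ∈ {q : ℝ × ℝ | 0 < q.2 ∧ q.2 ≤ q.1}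
          · rw [indicator_of_mem hmem, indicator_of_mem (show r ∈ Ici s from hmem.2)]
            rw [mul_comm]
          · rw [indicator_of_notMem hmem]
            exact zero_le
        refine le_trans (lintegral_mono hb) ?_
        rw [lintegral_const_mul' _ _ (by
          exact ENNReal.pow_ne_top ENNReal.ofReal_ne_top)]
        rw [lintegral_indicator measurableSet_Ici, shiftIci s (fun z => ENNReal.ofReal (k z)), ← hKdef]
        rw [indicator_of_mem (show s ∈ Ioi (0:ℝ) from hs)]
        have hg2 : (ENNReal.ofReal (g s)) ^ 2 = ENNReal.ofReal (f s ^ 2 * (1 + s^2) ^ γ * s) := by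
          rw [← ENNReal.ofReal_pow (hgnonneg s)]
          congr 1
          rw [hgdef]
          simp only
          rw [mul_pow, mul_pow, sq_abs, sqrt_half_sq s hs.le,
            ← Real.rpow_natCast ((1 + s^2) ^ (γ/2)) 2, ← Real.rpow_mul (by positivity)]
          norm_num
        rw [hg2, mul_comm]
      · have : ∀ r : ℝ, Q (r, s) = 0 := by
          intro r
          rw [hQdef]
          refine indicator_of_notMem ?_ _
          simp only [mem_setOf_eq, not_and_or]
          left; exact hs
        simp only [this]
        rw [lintegral_zero]
        exact zero_le
    refine le_trans (lintegral_mono hinner) ?_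
    rw [lintegral_indicator measurableSet_Ioi, lintegral_const_mul' _ _ hKne, ← hBdef]
  have hmain : A ≤ ENNReal.ofReal (C₀^2) * K * (K * B) := hA1.trans (mul_le_mul_right hT _)
  -- finish
  have hAfin : A ≠ ⊤ := by
    refine ne_of_lt (lt_of_le_of_lt hmain ?_)
    exact ENNReal.mul_lt_top (ENNReal.mul_lt_top ENNReal.ofReal_lt_top hKne.lt_top)
      (ENNReal.mul_lt_top hKne.lt_top hBne.lt_top)
  have htR : A.toReal ≤ C₀^2 * K.toReal * (K.toReal * B.toReal) := by
    have := ENNReal.toReal_mono (by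
      exact ENNReal.mul_ne_top (ENNReal.mul_ne_top ENNReal.ofReal_ne_top hKne)
        (ENNReal.mul_ne_top hKne hBne)) hmain
    rwa [ENNReal.toReal_mul, ENNReal.toReal_mul, ENNReal.toReal_mul,
      ENNReal.toReal_ofReal (by positivity)] at this
  rw [hLHS, hRHS]
  have hsq : Real.sqrt A.toReal ≤ Real.sqrt (C₀^2 * K.toReal * (K.toReal * B.toReal)) :=
    Real.sqrt_le_sqrt htR
  refine hsq.trans ?_
  have heq : C₀^2 * K.toReal * (K.toReal * B.toReal) = (C₀ * K.toReal)^2 * B.toReal := by ring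
  rw [heq, Real.sqrt_mul (by positivity), Real.sqrt_sq (by positivity)]
  refine mul_le_mul_of_nonneg_right ?_ (Real.sqrt_nonneg _)
  linarith
end
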